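/- Let S and A be finite nonempty sets, Z := S × A, R : Z → [0,1], γ ∈ (0,1), β := 1/(1−γ), and L ≥ 0. Let μ₁, μ₂ ∈ ℝ^m and let f_z^{s′} : ℝ^m → ℝ for each (z,s′) ∈ Z × S satisfy: P(s′|z) := f_z^{s′}(μ₁) defines a transition probability function (nonnegative, rows summing to 1), P′(s′|z) := f_z^{s′}(μ₂) also defines a transition probability function, and |f_z^{s′}(ν₁) − f_z^{s′}(ν₂)| ≤ L·P(s′|z)·‖ν₁ − ν₂‖₂ for all ν₁, ν₂ ∈ ℝ^m. If Q : Z → ℝ satisfies the Bellman optimality equation for (P,R,γ) and Q′ : Z → ℝ satisfies the Bellman optimality equation for (P′,R,γ), then max_{z∈Z} |Q(z) − Q′(z)| ≤ γ·β²·L·‖μ₁ − μ₂‖₂. -/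
import Mathlib

lemma abs_ciSup_le' {α : Type*} [Fintype α] [Nonempty α] (f : α → ℝ) (c : ℝ)
    (h : ∀ a, |f a| ≤ c) : |⨆ a, f a| ≤ c := by
  have hb : BddAbove (Set.range f) := (Set.finite_range f).bddAbove
  rw [abs_le]
  constructor
  · have := le_ciSup hb (Classical.arbitrary α)
    have := (abs_le.1 (h (Classical.arbitrary α))).1
    linarith
  · exact ciSup_le fun a => (abs_le.1 (h a)).2

lemma abs_ciSup_sub_ciSup_le' {α : Type*} [Fintype α] [Nonempty α] (f g : α → ℝ) (c : ℝ)
    (h : ∀ a, |f a - g a| ≤ c) : |(⨆ a, f a) - ⨆ a, g a| ≤ c := by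
  have hbf : BddAbove (Set.range f) := (Set.finite_range f).bddAbove
  have hbg : BddAbove (Set.range g) := (Set.finite_range g).bddAbove
  rw [abs_sub_le_iff]
  constructor
  · have h1 : (⨆ a, f a) ≤ (⨆ a, g a) + c := by
      refine ciSup_le fun a => ?_
      have := (abs_le.1 (h a)).2
      have := le_ciSup hbg a
      linarith
    linarith
  · have h1 : (⨆ a, g a) ≤ (⨆ a, f a) + c := by
      refine ciSup_le fun a => ?_
      have := (abs_le.1 (h a)).1
      have := le_ciSup hbf a
      linarith
    linarith

lemma q_abs_le_beta' {S A : Type*} [Fintype S] [Fintype A] [Nonempty S] [Nonempty A]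
    (R : S × A → ℝ) (hR : ∀ z, R z ∈ Set.Icc (0 : ℝ) 1)
    (γ : ℝ) (hγ : γ ∈ Set.Ioo (0 : ℝ) 1)
    (β : ℝ) (hβ : β = 1 / (1 - γ))
    (P : S × A → S → ℝ) (hP0 : ∀ z s', 0 ≤ P z s') (hP1 : ∀ z, ∑ s', P z s' = 1)
    (Q : S × A → ℝ)
    (hQ : ∀ z : S × A, Q z = R z + γ * ∑ s', P z s' * ⨆ a', Q (s', a')) :
    ∀ z, |Q z| ≤ β := by
  obtain ⟨hγ0, hγ1⟩ := hγ
  have h1γ : (0:ℝ) < 1 - γ := by linarith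
  set K := Finset.univ.sup' Finset.univ_nonempty (fun z : S × A => |Q z|) with hKdef
  have hK : ∀ z, |Q z| ≤ K := fun z => Finset.le_sup' (fun z : S × A => |Q z|) (Finset.mem_univ z)
  obtain ⟨z₀, -, hz₀⟩ := Finset.exists_mem_eq_sup' Finset.univ_nonempty
    (fun z : S × A => |Q z|)
  have hK0 : 0 ≤ K := le_trans (abs_nonneg _) (hK z₀)
  have hV : ∀ s', |⨆ a, Q (s', a)| ≤ K := fun s' => abs_ciSup_le' _ _ (fun a => hK (s', a))
  have hsum : |∑ s', P z₀ s' * ⨆ a, Q (s', a)| ≤ K := by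
    calc |∑ s', P z₀ s' * ⨆ a, Q (s', a)| ≤ ∑ s', |P z₀ s' * ⨆ a, Q (s', a)| :=
          Finset.abs_sum_le_sum_abs _ _
      _ ≤ ∑ s', P z₀ s' * K := by
          refine Finset.sum_le_sum fun s' _ => ?_
          rw [abs_mul, abs_of_nonneg (hP0 z₀ s')]
          exact mul_le_mul_of_nonneg_left (hV s') (hP0 z₀ s')
      _ = K := by rw [← Finset.sum_mul, hP1, one_mul]
  have hKle : K ≤ 1 + γ * K := by
    have := hQ z₀
    have hRz := hR z₀
    calc K = |Q z₀| := hz₀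
      _ = |R z₀ + γ * ∑ s', P z₀ s' * ⨆ a, Q (s', a)| := by rw [hQ z₀]
      _ ≤ |R z₀| + |γ * ∑ s', P z₀ s' * ⨆ a, Q (s', a)| := abs_add_le _ _
      _ ≤ 1 + γ * K := by
          have h1 : |R z₀| ≤ 1 := abs_le.2 ⟨by linarith [hRz.1], hRz.2⟩
          have h2 : |γ * ∑ s', P z₀ s' * ⨆ a, Q (s', a)| ≤ γ * K := by
            rw [abs_mul, abs_of_pos hγ0]
            exact mul_le_mul_of_nonneg_left hsum hγ0.le
          linarith
  intro z
  have : K ≤ β := by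
    rw [hβ, le_div_iff₀ h1γ]; nlinarith
  exact le_trans (hK z) this

/-- Deterministic structural perturbation bound on the optimal Q-function: if the two
transition models are reconstructed from parameter vectors `μ₁` and `μ₂` through the
`(L·P(s′|z))`-Lipschitz structural functions, then the optimal action-value functions
differ by at most `γβ²L‖μ₁ − μ₂‖₂`. -/
theorem q_perturbation_bound
    {S A : Type*} [Fintype S] [Fintype A] [Nonempty S] [Nonempty A]
    {m : ℕ}
    (R : S × A → ℝ) (hR : ∀ z, R z ∈ Set.Icc (0 : ℝ) 1)
    (γ : ℝ) (hγ : γ ∈ Set.Ioo (0 : ℝ) 1)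
    (β : ℝ) (hβ : β = 1 / (1 - γ))
    (L : ℝ) (hL : 0 ≤ L)
    (μ₁ μ₂ : EuclideanSpace ℝ (Fin m))
    (f : S × A → S → EuclideanSpace ℝ (Fin m) → ℝ)
    (P P' : S × A → S → ℝ)
    (hP : ∀ z s', P z s' = f z s' μ₁) (hP' : ∀ z s', P' z s' = f z s' μ₂)
    (hP0 : ∀ z s', 0 ≤ P z s') (hP1 : ∀ z, ∑ s', P z s' = 1)
    (hP'0 : ∀ z s', 0 ≤ P' z s') (hP'1 : ∀ z, ∑ s', P' z s' = 1)
    (hLip : ∀ z s' ν₁ ν₂, |f z s' ν₁ - f z s' ν₂| ≤ L * P z s' * ‖ν₁ - ν₂‖)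
    (Q Q' : S × A → ℝ)
    (hQ : ∀ z : S × A, Q z = R z + γ * ∑ s', P z s' * ⨆ a', Q (s', a'))
    (hQ' : ∀ z : S × A, Q' z = R z + γ * ∑ s', P' z s' * ⨆ a', Q' (s', a')) :
    ∀ z : S × A, |Q z - Q' z| ≤ γ * β ^ 2 * L * ‖μ₁ - μ₂‖ := by
  obtain ⟨hγ0, hγ1⟩ := hγ
  have h1γ : (0:ℝ) < 1 - γ := by linarith
  have hβpos : 0 < β := by rw [hβ]; positivity
  set D := ‖μ₁ - μ₂‖ with hDdef
  have hD0 : (0:ℝ) ≤ D := norm_nonneg _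
  -- bound |Q| ≤ β
  have hQb : ∀ z, |Q z| ≤ β := q_abs_le_beta' R hR γ ⟨hγ0, hγ1⟩ β hβ P hP0 hP1 Q hQ
  -- max of |Q - Q'|
  set M := Finset.univ.sup' Finset.univ_nonempty (fun z : S × A => |Q z - Q' z|) with hMdef
  have hM : ∀ z, |Q z - Q' z| ≤ M := fun z => Finset.le_sup' (fun z : S × A => |Q z - Q' z|) (Finset.mem_univ z)
  obtain ⟨z₀, -, hz₀⟩ := Finset.exists_mem_eq_sup' Finset.univ_nonempty
    (fun z : S × A => |Q z - Q' z|)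
  have hVb : ∀ s', |⨆ a, Q (s', a)| ≤ β := fun s' => abs_ciSup_le' _ _ (fun a => hQb (s', a))
  have hVV' : ∀ s', |(⨆ a, Q (s', a)) - ⨆ a, Q' (s', a)| ≤ M := fun s' =>
    abs_ciSup_sub_ciSup_le' _ _ _ (fun a => hM (s', a))
  have hPP' : ∀ s', |P z₀ s' - P' z₀ s'| ≤ L * P z₀ s' * D := by
    intro s'
    calc |P z₀ s' - P' z₀ s'| = |f z₀ s' μ₁ - f z₀ s' μ₂| := by rw [hP, hP']
      _ ≤ L * P z₀ s' * D := hLip z₀ s' μ₁ μ₂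
  have key : M ≤ γ * (L * β * D + M) := by
    have hsplit : Q z₀ - Q' z₀ =
        γ * ∑ s', ((P z₀ s' - P' z₀ s') * (⨆ a, Q (s', a))
          + P' z₀ s' * ((⨆ a, Q (s', a)) - ⨆ a, Q' (s', a))) := by
      rw [hQ z₀, hQ' z₀]
      have e0 : ∀ s' : S, (P z₀ s' - P' z₀ s') * (⨆ a, Q (s', a))
          + P' z₀ s' * ((⨆ a, Q (s', a)) - ⨆ a, Q' (s', a))
          = P z₀ s' * (⨆ a, Q (s', a)) - P' z₀ s' * (⨆ a, Q' (s', a)) := fun s' => by ring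
      rw [Finset.sum_congr rfl fun s' _ => e0 s', Finset.sum_sub_distrib]
      ring
    have hterm : ∀ s' : S, |(P z₀ s' - P' z₀ s') * (⨆ a, Q (s', a))
          + P' z₀ s' * ((⨆ a, Q (s', a)) - ⨆ a, Q' (s', a))|
        ≤ L * P z₀ s' * D * β + P' z₀ s' * M := by
      intro s'
      refine le_trans (abs_add_le _ _) ?_
      have h1 : |(P z₀ s' - P' z₀ s') * (⨆ a, Q (s', a))| ≤ L * P z₀ s' * D * β := by
        rw [abs_mul]
        have := mul_le_mul (hPP' s') (hVb s') (abs_nonneg _)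
          (mul_nonneg (mul_nonneg hL (hP0 _ _)) hD0)
        linarith
      have h2 : |P' z₀ s' * ((⨆ a, Q (s', a)) - ⨆ a, Q' (s', a))| ≤ P' z₀ s' * M := by
        rw [abs_mul, abs_of_nonneg (hP'0 z₀ s')]
        exact mul_le_mul_of_nonneg_left (hVV' s') (hP'0 z₀ s')
      linarith
    calc M = |Q z₀ - Q' z₀| := hz₀
      _ = γ * |∑ s', ((P z₀ s' - P' z₀ s') * (⨆ a, Q (s', a))
          + P' z₀ s' * ((⨆ a, Q (s', a)) - ⨆ a, Q' (s', a)))| := by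
          rw [hsplit, abs_mul, abs_of_pos hγ0]
      _ ≤ γ * ∑ s', (L * P z₀ s' * D * β + P' z₀ s' * M) := by
          refine mul_le_mul_of_nonneg_left ?_ hγ0.le
          exact le_trans (Finset.abs_sum_le_sum_abs _ _) (Finset.sum_le_sum fun s' _ => hterm s')
      _ = γ * (L * β * D + M) := by
          congr 1
          have e0 : ∀ s' : S, L * P z₀ s' * D * β + P' z₀ s' * M
              = P z₀ s' * (L * β * D) + P' z₀ s' * M := fun s' => by ring
          rw [Finset.sum_congr rfl fun s' _ => e0 s', Finset.sum_add_distrib,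
            ← Finset.sum_mul, ← Finset.sum_mul, hP1, hP'1, one_mul, one_mul]
  intro z
  have hβγ : β * (1 - γ) = 1 := by rw [hβ]; field_simp
  have hMle : M ≤ γ * β ^ 2 * L * D := by
    have h2 : (1 - γ) * M ≤ γ * L * β * D := by linarith
    have h3 := mul_le_mul_of_nonneg_left h2 hβpos.le
    calc M = β * ((1 - γ) * M) := by rw [← mul_assoc, hβγ, one_mul]
      _ ≤ β * (γ * L * β * D) := h3
      _ = γ * β ^ 2 * L * D := by ring
  exact le_trans (hM z) hMle
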